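/- arXiv:gr-qc/9905061 — 5 statements merged into one kernel-verified Lean document; each statement's English description precedes it below -/
import Mathlib

section
/- Let v, τ ∈ ℝ and let ζ : ℝ → ℝ be 2π-periodic. Define ψ : ℝ × ℝ → ℝ by ψ(θ, t) = ζ(θ − v t) + ζ(θ + v t − 2 v τ + π). Then ψ is 2π-periodic in its first argument and satisfies the antipodal time-reversal gluing condition at time τ, i.e. ψ(θ, τ + s) = ψ(θ + π, τ − s) for all θ, s ∈ ℝ. Moreover, if ζ is twice continuously differentiable, then ψ satisfies the one-dimensional wave equation ∂²ψ/∂t² = v² ∂²ψ/∂θ². -/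
open Real

lemma aff_deriv {g : ℝ → ℝ} (hg : Differentiable ℝ g) (a c x : ℝ) :
    HasDerivAt (fun y : ℝ => g (a + c * y)) (c * deriv g (a + c * x)) x := by
  have h : HasDerivAt (fun y : ℝ => a + c * y) c x := by
    simpa using ((hasDerivAt_id x).const_mul c).const_add a
  have := ((hg (a + c * x)).hasDerivAt).comp x h
  rw [mul_comm (deriv g _) c] at this
  exact this

/-- for 2π-periodic `ζ`, the function
`ψ(θ, t) = ζ(θ − v t) + ζ(θ + v t − 2 v τ + π)` is 2π-periodic in `θ`,
satisfies the antipodal time-reversal gluing condition at time `τ`, and,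
if `ζ` is C², satisfies the 1D wave equation `∂²ψ/∂t² = v² ∂²ψ/∂θ²`. -/
theorem stmt0 (v τ : ℝ) (ζ : ℝ → ℝ) (hζper : ∀ x, ζ (x + 2 * π) = ζ x)
    (ψ : ℝ → ℝ → ℝ)
    (hψ : ∀ θ t, ψ θ t = ζ (θ - v * t) + ζ (θ + v * t - 2 * v * τ + π)) :
    (∀ θ t, ψ (θ + 2 * π) t = ψ θ t) ∧
    (∀ θ s, ψ θ (τ + s) = ψ (θ + π) (τ - s)) ∧
    (ContDiff ℝ 2 ζ →
      ∀ θ t,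
        deriv (fun t' => deriv (fun t'' => ψ θ t'') t') t =
          v ^ 2 * deriv (fun θ' => deriv (fun θ'' => ψ θ'' t) θ') θ) := by
  refine ⟨?_, ?_, ?_⟩
  · intro θ t
    rw [hψ, hψ]
    have h1 : θ + 2 * π - v * t = (θ - v * t) + 2 * π := by ring
    have h2 : θ + 2 * π + v * t - 2 * v * τ + π
        = (θ + v * t - 2 * v * τ + π) + 2 * π := by ring
    rw [h1, h2, hζper, hζper]
  · intro θ s
    rw [hψ, hψ]
    have h1 : θ - v * (τ + s) = θ - v * τ - v * s := by ring
    have h2 : θ + v * (τ + s) - 2 * v * τ + π = θ - v * τ + v * s + π := by ring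
    have h3 : θ + π - v * (τ - s) = θ - v * τ + v * s + π := by ring
    have h4 : θ + π + v * (τ - s) - 2 * v * τ + π
        = (θ - v * τ - v * s) + 2 * π := by ring
    rw [h1, h2, h3, h4, hζper, add_comm]
  · intro hC θ t
    have hd1 : Differentiable ℝ ζ := hC.differentiable two_ne_zero
    have hd2 : Differentiable ℝ (deriv ζ) := by
      have h := (contDiff_succ_iff_deriv.mp (show ContDiff ℝ ((1 : ℕ) + 1) ζ from by
        exact_mod_cast hC)).2
      exact h.2.differentiable (by simp)
    set D := deriv ζ with hD
    -- t-derivative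
    have e1 : (fun t' => deriv (fun t'' => ψ θ t'') t')
        = fun t' => (-v) * D (θ + (-v) * t') + v * D ((θ - 2 * v * τ + π) + v * t') := by
      funext t'
      have h1 := aff_deriv hd1 θ (-v) t'
      have h2 := aff_deriv hd1 (θ - 2 * v * τ + π) v t'
      have : (fun t'' => ψ θ t'')
          = fun t'' => ζ (θ + (-v) * t'') + ζ ((θ - 2 * v * τ + π) + v * t'') := by
        funext t''; rw [hψ]; ring_nf
      rw [this]
      exact (h1.add h2).deriv
    rw [e1]
    have h1 := (aff_deriv hd2 θ (-v) t).const_mul (-v)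
    have h2 := (aff_deriv hd2 (θ - 2 * v * τ + π) v t).const_mul v
    have lhs := (h1.fun_add h2).deriv
    rw [lhs]
    -- θ-derivative
    have e2 : (fun θ' => deriv (fun θ'' => ψ θ'' t) θ')
        = fun θ' => (1 : ℝ) * D ((-(v * t)) + 1 * θ') + 1 * D ((v * t - 2 * v * τ + π) + 1 * θ') := by
      funext θ'
      have h1 := aff_deriv hd1 (-(v * t)) 1 θ'
      have h2 := aff_deriv hd1 (v * t - 2 * v * τ + π) 1 θ'
      have : (fun θ'' => ψ θ'' t)
          = fun θ'' => ζ ((-(v * t)) + 1 * θ'') + ζ ((v * t - 2 * v * τ + π) + 1 * θ'') := by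
        funext θ''; rw [hψ]; ring_nf
      rw [this]
      exact (h1.add h2).deriv
    rw [e2]
    have g1 := (aff_deriv hd2 (-(v * t)) 1 θ).const_mul (1 : ℝ)
    have g2 := (aff_deriv hd2 (v * t - 2 * v * τ + π) 1 θ).const_mul (1 : ℝ)
    have rhs := (g1.fun_add g2).deriv
    rw [rhs]
    have a1 : θ + -v * t = -(v * t) + 1 * θ := by ring
    have a2 : θ - 2 * v * τ + π + v * t = v * t - 2 * v * τ + π + 1 * θ := by ring
    rw [a1, a2]; ring
end

section
/- Let v, τ ∈ ℝ with v ≠ 0, let ζ, φ : ℝ → ℝ, and define ψ(θ, t) = ζ(θ − v t) + φ(θ + v t). If ψ satisfies the antipodal time-reversal gluing condition at time τ (ψ(θ, τ + s) = ψ(θ + π, τ − s) for all θ, s ∈ ℝ), then there exists a constant c ∈ ℝ such that φ(x) = ζ(x − 2 v τ + π) − c for all x ∈ ℝ, and consequently ψ(θ, t) = ζ(θ − v t) + ζ(θ + v t − 2 v τ + π) − c for all θ, t ∈ ℝ. In particular the backward-moving profile φ, and hence the initial data of ψ, cannot be specified independently of the value of τ at which the topology change occurs. -/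
open Real

/-- if a d'Alembert-form solution `ψ(θ, t) = ζ(θ − v t) + φ(θ + v t)`
satisfies the antipodal time-reversal gluing condition at time `τ`, then for some
constant `c`, `φ(x) = ζ(x − 2 v τ + π) − c` for all `x`, and consequently
`ψ(θ, t) = ζ(θ − v t) + ζ(θ + v t − 2 v τ + π) − c` for all `θ, t`. -/
theorem stmt2 (v τ : ℝ) (hv : v ≠ 0) (ζ φ : ℝ → ℝ) (ψ : ℝ → ℝ → ℝ)
    (hψ : ∀ θ t, ψ θ t = ζ (θ - v * t) + φ (θ + v * t))
    (hglue : ∀ θ s, ψ θ (τ + s) = ψ (θ + π) (τ - s)) :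
    ∃ c : ℝ, (∀ x, φ x = ζ (x - 2 * v * τ + π) - c) ∧
      (∀ θ t, ψ θ t = ζ (θ - v * t) + ζ (θ + v * t - 2 * v * τ + π) - c) := by
  have key : ∀ a b : ℝ, ζ a + φ b = ζ (b - 2 * v * τ + π) + φ (a + 2 * v * τ + π) := by
    intro a b
    have h := hglue ((a + b) / 2) (((b - a) / 2 - v * τ) / v)
    rw [hψ, hψ] at h
    have hs : v * (((b - a) / 2 - v * τ) / v) = (b - a) / 2 - v * τ := by
      field_simp
    rw [show (a + b) / 2 - v * (τ + ((b - a) / 2 - v * τ) / v) = a by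
          rw [mul_add, hs]; ring,
        show (a + b) / 2 + v * (τ + ((b - a) / 2 - v * τ) / v) = b by
          rw [mul_add, hs]; ring,
        show (a + b) / 2 + π - v * (τ - ((b - a) / 2 - v * τ) / v) = b - 2 * v * τ + π by
          rw [mul_sub, hs]; ring,
        show (a + b) / 2 + π + v * (τ - ((b - a) / 2 - v * τ) / v) = a + 2 * v * τ + π by
          rw [mul_sub, hs]; ring] at h
    exact h
  refine ⟨ζ 0 - φ (2 * v * τ + π), fun x => ?_, fun θ t => ?_⟩
  · have h := key 0 x
    rw [show (0 : ℝ) + 2 * v * τ + π = 2 * v * τ + π by ring] at h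
    linarith
  · have h := key 0 (θ + v * t)
    rw [show (0 : ℝ) + 2 * v * τ + π = 2 * v * τ + π by ring] at h
    rw [hψ]
    linarith
end

section
/- Let v, τ ∈ ℝ with v ≠ 0 and let ψ : ℝ × ℝ → ℝ be twice continuously differentiable, satisfying the one-dimensional wave equation ∂²ψ/∂t²(θ, t) = v² ∂²ψ/∂θ²(θ, t) for all θ, t ∈ ℝ, and satisfying the antipodal time-reversal gluing condition at time τ (ψ(θ, τ + s) = ψ(θ + π, τ − s) for all θ, s ∈ ℝ). Then there exists a twice continuously differentiable function ζ : ℝ → ℝ such that ψ(θ, t) = ζ(θ − v t) + ζ(θ + v t − 2 v τ + π) for all θ, t ∈ ℝ. -/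
open Real

/-- if a C² function `ψ` satisfies the one-dimensional wave
equation `∂²ψ/∂t² = v² ∂²ψ/∂θ²` (with `v ≠ 0`) and the antipodal time-reversal
gluing condition at time `τ`, then there is a C² function `ζ` with
`ψ(θ, t) = ζ(θ − v t) + ζ(θ + v t − 2 v τ + π)` for all `θ, t`. -/
theorem stmt3 (v τ : ℝ) (hv : v ≠ 0) (ψ : ℝ → ℝ → ℝ)
    (hC2 : ContDiff ℝ 2 (fun p : ℝ × ℝ => ψ p.1 p.2))
    (hwave : ∀ θ t,
      deriv (fun t' => deriv (fun t'' => ψ θ t'') t') t =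
        v ^ 2 * deriv (fun θ' => deriv (fun θ'' => ψ θ'' t) θ') θ)
    (hglue : ∀ θ s, ψ θ (τ + s) = ψ (θ + π) (τ - s)) :
    ∃ ζ : ℝ → ℝ, ContDiff ℝ 2 ζ ∧
      ∀ θ t, ψ θ t = ζ (θ - v * t) + ζ (θ + v * t - 2 * v * τ + π) := by
  set Ψ : ℝ × ℝ → ℝ := fun p => ψ p.1 p.2 with hΨdef
  have hΨd : Differentiable ℝ Ψ := hC2.differentiable (by norm_num)
  have hΨ'c : ContDiff ℝ 1 (fderiv ℝ Ψ) := hC2.fderiv_right (by norm_num)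
  have hΨ'd : Differentiable ℝ (fderiv ℝ Ψ) := hΨ'c.differentiable one_ne_zero
  -- derivative of Ψ along a curve
  have hline : ∀ (c : ℝ → ℝ × ℝ) (d : ℝ × ℝ) (x : ℝ), HasDerivAt c d x →
      HasDerivAt (fun s => Ψ (c s)) (fderiv ℝ Ψ (c x) d) x := by
    intro c d x hc
    exact ((hΨd (c x)).hasFDerivAt).comp_hasDerivAt x hc
  -- derivative of directional derivative of Ψ along a curve
  have hline2 : ∀ (c : ℝ → ℝ × ℝ) (d w : ℝ × ℝ) (x : ℝ), HasDerivAt c d x →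
      HasDerivAt (fun s => fderiv ℝ Ψ (c s) w)
        (fderiv ℝ (fderiv ℝ Ψ) (c x) d w) x := by
    intro c d w x hc
    have h1 : HasDerivAt (fun s => fderiv ℝ Ψ (c s))
        (fderiv ℝ (fderiv ℝ Ψ) (c x) d) x :=
      ((hΨ'd (c x)).hasFDerivAt).comp_hasDerivAt x hc
    exact ((ContinuousLinearMap.apply ℝ ℝ w).hasFDerivAt).comp_hasDerivAt x h1
  -- symmetry of second derivatives
  have hsymm : ∀ (p z w : ℝ × ℝ),
      fderiv ℝ (fderiv ℝ Ψ) p z w = fderiv ℝ (fderiv ℝ Ψ) p w z := by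
    intro p z w
    exact second_derivative_symmetric (fun y => (hΨd y).hasFDerivAt)
      ((hΨ'd p).hasFDerivAt) z w
  -- the wave equation in terms of the second fderiv
  have hB : ∀ p : ℝ × ℝ, fderiv ℝ (fderiv ℝ Ψ) p (0, 1) (0, 1) =
      v ^ 2 * fderiv ℝ (fderiv ℝ Ψ) p (1, 0) (1, 0) := by
    rintro ⟨θ, t⟩
    have hcv : ∀ θ0 t0 : ℝ, HasDerivAt (fun t'' : ℝ => ((θ0 : ℝ), t''))
        ((0 : ℝ), (1 : ℝ)) t0 := fun θ0 t0 =>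
      (hasDerivAt_const t0 θ0).prodMk (hasDerivAt_id t0)
    have hch : ∀ θ0 t0 : ℝ, HasDerivAt (fun θ'' : ℝ => (θ'', (t0 : ℝ)))
        ((1 : ℝ), (0 : ℝ)) θ0 := fun θ0 t0 =>
      (hasDerivAt_id θ0).prodMk (hasDerivAt_const θ0 t0)
    have e1 : ∀ θ0 t0 : ℝ, deriv (fun t'' => ψ θ0 t'') t0 =
        fderiv ℝ Ψ (θ0, t0) (0, 1) := fun θ0 t0 =>
      (hline (fun t'' => (θ0, t'')) _ t0 (hcv θ0 t0)).deriv
    have e2 : ∀ θ0 t0 : ℝ, deriv (fun θ'' => ψ θ'' t0) θ0 =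
        fderiv ℝ Ψ (θ0, t0) (1, 0) := fun θ0 t0 =>
      (hline (fun θ'' => (θ'', t0)) _ θ0 (hch θ0 t0)).deriv
    have L : deriv (fun t' => deriv (fun t'' => ψ θ t'') t') t =
        fderiv ℝ (fderiv ℝ Ψ) (θ, t) (0, 1) (0, 1) := by
      have : (fun t' => deriv (fun t'' => ψ θ t'') t') =
          fun t' => fderiv ℝ Ψ (θ, t') (0, 1) := funext fun t' => e1 θ t'
      rw [this]
      exact (hline2 (fun t' => (θ, t')) _ _ t (hcv θ t)).deriv
    have R : deriv (fun θ' => deriv (fun θ'' => ψ θ'' t) θ') θ =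
        fderiv ℝ (fderiv ℝ Ψ) (θ, t) (1, 0) (1, 0) := by
      have : (fun θ' => deriv (fun θ'' => ψ θ'' t) θ') =
          fun θ' => fderiv ℝ Ψ (θ', t) (1, 0) := funext fun θ' => e2 θ' t
      rw [this]
      exact (hline2 (fun θ' => (θ', t)) _ _ θ (hch θ t)).deriv
    have := hwave θ t
    rw [L, R] at this
    exact this
  -- the mixed characteristic second derivative vanishes
  have hmix : ∀ q : ℝ × ℝ,
      fderiv ℝ (fderiv ℝ Ψ) q ((1:ℝ)/2, -1/(2*v)) ((1:ℝ)/2, 1/(2*v)) = 0 := by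
    intro q
    have hexp : ∀ x : ℝ × ℝ, x = x.1 • ((1:ℝ), (0:ℝ)) + x.2 • ((0:ℝ), (1:ℝ)) := by
      intro x; ext <;> simp
    rw [hexp ((1:ℝ)/2, -1/(2*v)), hexp ((1:ℝ)/2, 1/(2*v))]
    simp only [map_add, map_smul, ContinuousLinearMap.add_apply,
      ContinuousLinearMap.smul_apply, smul_eq_mul]
    have h12 : fderiv ℝ (fderiv ℝ Ψ) q ((1:ℝ), (0:ℝ)) ((0:ℝ), (1:ℝ)) =
        fderiv ℝ (fderiv ℝ Ψ) q ((0:ℝ), (1:ℝ)) ((1:ℝ), (0:ℝ)) := hsymm q _ _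
    rw [h12, hB q]
    field_simp
    ring
  -- characteristic coordinates
  set U : ℝ → ℝ → ℝ := fun a b => ψ ((a + b) / 2) ((b - a) / (2 * v)) with hUdef
  set f1 : ℝ → ℝ → ℝ := fun a b =>
    fderiv ℝ Ψ ((a + b) / 2, (b - a) / (2 * v)) ((1:ℝ)/2, -1/(2*v)) with hf1def
  have hca : ∀ a b : ℝ, HasDerivAt (fun a' => (((a' + b) / 2 : ℝ), ((b - a') / (2 * v) : ℝ)))
      ((1:ℝ)/2, -1/(2*v)) a := by
    intro a b
    exact (((hasDerivAt_id a).add_const b).div_const 2).prodMk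
      (((hasDerivAt_id a).const_sub b).div_const (2 * v))
  have hcb : ∀ a b : ℝ, HasDerivAt (fun b' => (((a + b') / 2 : ℝ), ((b' - a) / (2 * v) : ℝ)))
      ((1:ℝ)/2, 1/(2*v)) b := by
    intro a b
    exact (((hasDerivAt_id b).const_add a).div_const 2).prodMk
      (((hasDerivAt_id b).sub_const a).div_const (2 * v))
  have hUa : ∀ a b : ℝ, HasDerivAt (fun a' => U a' b) (f1 a b) a := by
    intro a b
    exact hline _ _ a (hca a b)
  have hf1b : ∀ a b : ℝ, HasDerivAt (fun b' => f1 a b') 0 b := by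
    intro a b
    have h := hline2 _ ((1:ℝ)/2, 1/(2*v)) ((1:ℝ)/2, -1/(2*v)) b (hcb a b)
    have hz : fderiv ℝ (fderiv ℝ Ψ) ((a + b) / 2, (b - a) / (2 * v))
        ((1:ℝ)/2, 1/(2*v)) ((1:ℝ)/2, -1/(2*v)) = 0 := by
      rw [hsymm]; exact hmix _
    rw [hz] at h
    exact h
  have hf1const : ∀ a b : ℝ, f1 a b = f1 a 0 := by
    intro a b
    exact is_const_of_deriv_eq_zero (fun b' => (hf1b a b').differentiableAt)
      (fun b' => (hf1b a b').deriv) b 0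
  have hUsplit : ∀ a b : ℝ, U a b = U a 0 + (U 0 b - U 0 0) := by
    intro a b
    have hg : ∀ a' : ℝ, HasDerivAt (fun x => U x b - U x 0) 0 a' := by
      intro a'
      have := (hUa a' b).sub (hUa a' 0)
      rwa [hf1const a' b, sub_self] at this
    have := is_const_of_deriv_eq_zero (fun x => (hg x).differentiableAt)
      (fun x => (hg x).deriv) a 0
    linarith [this]
  set F : ℝ → ℝ := fun a => U a 0 with hFdef
  set G : ℝ → ℝ := fun b => U 0 b - U 0 0 with hGdef
  have hrep : ∀ θ t : ℝ, ψ θ t = F (θ - v * t) + G (θ + v * t) := by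
    intro θ t
    have e1 : ((θ - v * t) + (θ + v * t)) / 2 = θ := by ring
    have e2 : ((θ + v * t) - (θ - v * t)) / (2 * v) = t := by
      field_simp; ring
    have : ψ θ t = U (θ - v * t) (θ + v * t) := by
      rw [hUdef]; simp only [e1, e2]
    rw [this, hUsplit]
  -- gluing in terms of F and G
  have hFG : ∀ x y : ℝ, F x + G y = F (y - 2 * v * τ + π) + G (x + 2 * v * τ + π) := by
    intro x y
    have h := hglue ((x + y) / 2) ((y - x - 2 * v * τ) / (2 * v))
    rw [hrep, hrep] at h
    have a1 : (x + y) / 2 - v * (τ + (y - x - 2 * v * τ) / (2 * v)) = x := by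
      field_simp; ring
    have a2 : (x + y) / 2 + v * (τ + (y - x - 2 * v * τ) / (2 * v)) = y := by
      field_simp; ring
    have a3 : (x + y) / 2 + π - v * (τ - (y - x - 2 * v * τ) / (2 * v)) =
        y - 2 * v * τ + π := by field_simp; ring
    have a4 : (x + y) / 2 + π + v * (τ - (y - x - 2 * v * τ) / (2 * v)) =
        x + 2 * v * τ + π := by field_simp; ring
    rw [a1, a2, a3, a4] at h
    exact h
  have hGF : ∀ y : ℝ, G y = F (y - 2 * v * τ + π) + (G (2 * v * τ + π) - F 0) := by
    intro y
    have := hFG 0 y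
    simp only [zero_add] at this
    linarith
  -- conclude
  refine ⟨fun x => F x + (G (2 * v * τ + π) - F 0) / 2, ?_, ?_⟩
  · have hFc : ContDiff ℝ 2 F := by
      have hin : ContDiff ℝ 2 (fun a : ℝ => (((a + 0) / 2 : ℝ), ((0 - a) / (2 * v) : ℝ))) := by
        apply ContDiff.prodMk
        · exact (contDiff_id.add contDiff_const).div_const 2
        · exact (contDiff_const.sub contDiff_id).div_const (2 * v)
      exact hC2.comp hin
    exact hFc.add contDiff_const
  · intro θ t
    rw [hrep θ t, hGF (θ + v * t)]
    ring
end

section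
/- Let v, τ₁, τ₂ ∈ ℝ with v ≠ 0, let ζ, φ : ℝ → ℝ, and define ψ(θ, t) = ζ(θ − v t) + φ(θ + v t). Suppose ψ satisfies the antipodal time-reversal gluing condition both at time τ₁ and at time τ₂ (i.e. ψ(θ, τᵢ + s) = ψ(θ + π, τᵢ − s) for all θ, s ∈ ℝ and i = 1, 2). Then there exists a constant c ∈ ℝ such that ζ(x + 2 v (τ₂ − τ₁)) = ζ(x) + c for all x ∈ ℝ; moreover, if ζ is bounded then c = 0, so that ζ is periodic with period 2 v (τ₂ − τ₁). In particular, topology changes (measurements) at two different times τ₁ ≠ τ₂ impose incompatible boundary conditions unless the profile ζ has the special period 2 v (τ₂ − τ₁). -/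
open Real

private lemma key (v τ : ℝ) (hv : v ≠ 0) (ζ φ : ℝ → ℝ) (ψ : ℝ → ℝ → ℝ)
    (hψ : ∀ θ t, ψ θ t = ζ (θ - v * t) + φ (θ + v * t))
    (hglue : ∀ θ s, ψ θ (τ + s) = ψ (θ + π) (τ - s)) :
    ∀ a, ζ a = φ (a + π + 2 * v * τ) + (ζ (π - 2 * v * τ) - φ 0) := by
  intro a
  have h := hglue (a / 2) ((-a / 2 - v * τ) / v)
  rw [hψ, hψ] at h
  have e1 : a / 2 - v * (τ + (-a / 2 - v * τ) / v) = a := by field_simp; ring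
  have e2 : a / 2 + v * (τ + (-a / 2 - v * τ) / v) = 0 := by field_simp; ring
  have e3 : a / 2 + π - v * (τ - (-a / 2 - v * τ) / v) = π - 2 * v * τ := by
    field_simp; ring
  have e4 : a / 2 + π + v * (τ - (-a / 2 - v * τ) / v) = a + π + 2 * v * τ := by
    field_simp; ring
  rw [e1, e2, e3, e4] at h
  linarith

/-- if a d'Alembert-form solution `ψ(θ, t) = ζ(θ − v t) + φ(θ + v t)`
satisfies the antipodal time-reversal gluing condition both at time `τ₁` and at
time `τ₂`, then for some constant `c`, `ζ(x + 2 v (τ₂ − τ₁)) = ζ(x) + c` for all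
`x`; moreover if `ζ` is bounded then `c = 0`, so `ζ` is periodic with period
`2 v (τ₂ − τ₁)`. -/
theorem stmt4 (v τ₁ τ₂ : ℝ) (hv : v ≠ 0) (ζ φ : ℝ → ℝ) (ψ : ℝ → ℝ → ℝ)
    (hψ : ∀ θ t, ψ θ t = ζ (θ - v * t) + φ (θ + v * t))
    (hglue₁ : ∀ θ s, ψ θ (τ₁ + s) = ψ (θ + π) (τ₁ - s))
    (hglue₂ : ∀ θ s, ψ θ (τ₂ + s) = ψ (θ + π) (τ₂ - s)) :
    ∃ c : ℝ, (∀ x, ζ (x + 2 * v * (τ₂ - τ₁)) = ζ x + c) ∧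
      ((∃ M : ℝ, ∀ x, |ζ x| ≤ M) →
        c = 0 ∧ ∀ x, ζ (x + 2 * v * (τ₂ - τ₁)) = ζ x) := by
  have h1 := key v τ₁ hv ζ φ ψ hψ hglue₁
  have h2 := key v τ₂ hv ζ φ ψ hψ hglue₂
  set k₁ := ζ (π - 2 * v * τ₁) - φ 0 with hk₁
  set k₂ := ζ (π - 2 * v * τ₂) - φ 0 with hk₂
  refine ⟨k₁ - k₂, ?_, ?_⟩
  · intro x
    have hA := h1 (x + 2 * v * (τ₂ - τ₁))
    have hB := h2 x
    have harg : x + 2 * v * (τ₂ - τ₁) + π + 2 * v * τ₁ = x + π + 2 * v * τ₂ := by ring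
    rw [harg] at hA
    linarith
  · intro ⟨M, hM⟩
    set c := k₁ - k₂ with hc
    have per : ∀ x, ζ (x + 2 * v * (τ₂ - τ₁)) = ζ x + c := by
      intro x
      have hA := h1 (x + 2 * v * (τ₂ - τ₁))
      have hB := h2 x
      have harg : x + 2 * v * (τ₂ - τ₁) + π + 2 * v * τ₁ = x + π + 2 * v * τ₂ := by ring
      rw [harg] at hA
      linarith
    have iter : ∀ n : ℕ, ζ ((n : ℝ) * (2 * v * (τ₂ - τ₁))) = ζ 0 + n * c := by
      intro n
      induction n with
      | zero => simp
      | succ n ih =>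
        have := per ((n : ℝ) * (2 * v * (τ₂ - τ₁)))
        push_cast
        rw [show ((n : ℝ) + 1) * (2 * v * (τ₂ - τ₁)) =
          (n : ℝ) * (2 * v * (τ₂ - τ₁)) + 2 * v * (τ₂ - τ₁) from by ring, this, ih]
        ring
    have hc0 : c = 0 := by
      by_contra hne
      obtain ⟨n, hn⟩ := exists_nat_gt ((2 * M + 1) / |c|)
      have hcpos : 0 < |c| := abs_pos.mpr hne
      have hbig : 2 * M + 1 < n * |c| := by
        rw [div_lt_iff₀ hcpos] at hn; linarith
      have h1' := hM ((n : ℝ) * (2 * v * (τ₂ - τ₁)))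
      have h2' := hM 0
      have : |(n : ℝ) * c| ≤ 2 * M := by
        have e : (n : ℝ) * c = ζ ((n : ℝ) * (2 * v * (τ₂ - τ₁))) - ζ 0 := by
          rw [iter n]; ring
        rw [e]
        calc |ζ ((n : ℝ) * (2 * v * (τ₂ - τ₁))) - ζ 0|
            ≤ |ζ ((n : ℝ) * (2 * v * (τ₂ - τ₁)))| + |ζ 0| := abs_sub _ _
          _ ≤ 2 * M := by linarith
      rw [abs_mul, Nat.abs_cast] at this
      linarith
    exact ⟨hc0, fun x => by rw [per x, hc0, add_zero]⟩
end

section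
/- Take the profile ζ(x) = sin x and wave speed v = 1, and for τ ∈ ℝ let ψ_τ(θ, t) = sin(θ − t) + sin(θ + t − 2τ + π) be the corresponding consistent solution for a topology change at time τ. Then for τ₁, τ₂ ∈ ℝ, the initial profiles coincide — i.e. ψ_{τ₁}(θ, 0) = ψ_{τ₂}(θ, 0) for all θ ∈ ℝ — if and only if τ₁ − τ₂ is an integer multiple of π. In particular, for this profile the initial data on the surface t = 0 cannot be specified without knowing the time τ at which the antipodal identification occurs. -/
open Real

/-- with profile `ζ = sin` and `v = 1`, the consistent solutions
`ψ_τ(θ, t) = sin(θ − t) + sin(θ + t − 2τ + π)` for topology changes at times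
`τ₁` and `τ₂` have the same initial data at `t = 0` iff `τ₁ − τ₂` is an
integer multiple of `π`. -/
theorem stmt6 (ψ : ℝ → ℝ → ℝ → ℝ)
    (hψ : ∀ τ θ t, ψ τ θ t = sin (θ - t) + sin (θ + t - 2 * τ + π))
    (τ₁ τ₂ : ℝ) :
    (∀ θ : ℝ, ψ τ₁ θ 0 = ψ τ₂ θ 0) ↔ ∃ k : ℤ, τ₁ - τ₂ = k * π := by
  constructor
  · intro h
    have h1 := h (2 * τ₁ - π + π / 2)
    rw [hψ, hψ] at h1
    have h2 : sin (π / 2) = sin (π / 2 + (2 * τ₁ - 2 * τ₂)) := by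
      have := add_left_cancel h1
      convert this using 2 <;> ring
    rw [sin_pi_div_two, sin_add, sin_pi_div_two, cos_pi_div_two] at h2
    have h3 : cos (2 * τ₁ - 2 * τ₂) = 1 := by linarith
    obtain ⟨n, hn⟩ := (cos_eq_one_iff _).1 h3
    exact ⟨n, by linarith⟩
  · rintro ⟨k, hk⟩ θ
    rw [hψ, hψ]
    have : θ + 0 - 2 * τ₁ + π = (θ + 0 - 2 * τ₂ + π) + (-k : ℤ) * (2 * π) := by
      push_cast; linarith
    rw [this, sin_add_int_mul_two_pi]
end
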